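/- Let d ≥ 2 and n ≥ 1 be integers. If 2·cos(2π/n) is not rational, then (2·cos(2π/n))/d is not an algebraic integer. -/

import Mathlib

open Real

open Polynomial Complex in
noncomputable def chebP (n : ℕ) : ℚ[X] :=
  (Polynomial.Chebyshev.T ℚ n).comp (Polynomial.C (1/2 : ℚ) * Polynomial.X) - 1

lemma cheb_aeval (n : ℕ) (t : ℝ) :
    Polynomial.aeval ((2 * Real.cos t : ℝ) : ℂ) (chebP n)
      = ((Real.cos (n * t) : ℝ) : ℂ) - 1 := by
  unfold chebP
  rw [map_sub, map_one, Polynomial.aeval_comp, map_mul, Polynomial.aeval_C, Polynomial.aeval_X]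
  have h1 : (algebraMap ℚ ℂ) (1/2) * ((2 * Real.cos t : ℝ) : ℂ) = Complex.cos (t : ℂ) := by
    rw [eq_ratCast]
    push_cast [Complex.ofReal_cos]
    ring
  rw [h1, Polynomial.Chebyshev.aeval_T, Polynomial.Chebyshev.T_complex_cos]
  push_cast [Complex.ofReal_cos]
  ring_nf

open Polynomial Complex in
lemma chebP_root_form (n : ℕ) (hn : n ≠ 0) (z : ℂ)
    (hz : Polynomial.aeval z (chebP n) = 0) :
    ∃ r : ℝ, z = ((2 * Real.cos r : ℝ) : ℂ) := by
  obtain ⟨θ, hθ⟩ := Complex.cos_surjective (z / 2)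
  have h2 : Polynomial.aeval z (chebP n) = Complex.cos ((n : ℂ) * θ) - 1 := by
    unfold chebP
    rw [map_sub, map_one, Polynomial.aeval_comp, map_mul, Polynomial.aeval_C, Polynomial.aeval_X]
    have h1 : (algebraMap ℚ ℂ) (1/2) * z = z / 2 := by
      rw [eq_ratCast]; push_cast; ring
    rw [h1, ← hθ, Polynomial.Chebyshev.aeval_T, Polynomial.Chebyshev.T_complex_cos]
    push_cast
    ring_nf
  rw [h2] at hz
  have hcos : Complex.cos ((n : ℂ) * θ) = 1 := by linear_combination hz
  obtain ⟨k, hk⟩ := Complex.cos_eq_one_iff.mp hcos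
  refine ⟨(k * (2 * Real.pi)) / n, ?_⟩
  have hn' : (n : ℂ) ≠ 0 := Nat.cast_ne_zero.mpr hn
  have hθr : θ = (((k * (2 * Real.pi)) / n : ℝ) : ℂ) := by
    push_cast
    field_simp
    linear_combination -hk
  have : z / 2 = Complex.cos ((((k * (2 * Real.pi)) / n : ℝ)) : ℂ) := by rw [← hθr]; exact hθ.symm
  rw [← Complex.ofReal_cos] at this
  rw [Complex.ofReal_mul, Complex.ofReal_ofNat, ← this]
  ring

lemma multiset_prod_le_one (s : Multiset ℝ) (h : ∀ x ∈ s, 0 ≤ x ∧ x < 1) :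
    0 ≤ s.prod ∧ s.prod ≤ 1 := by
  induction s using Multiset.induction with
  | empty => simp
  | cons a t ih =>
    simp only [Multiset.prod_cons]
    have ha := h a (by simp)
    have ht := ih fun x hx => h x (Multiset.mem_cons_of_mem hx)
    exact ⟨mul_nonneg ha.1 ht.1, by nlinarith [ha.1, ha.2, ht.1, ht.2]⟩

lemma multiset_prod_lt_one (s : Multiset ℝ) (hs : s ≠ 0) (h : ∀ x ∈ s, 0 ≤ x ∧ x < 1) :
    s.prod < 1 := by
  obtain ⟨a, ha⟩ := Multiset.exists_mem_of_ne_zero hs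
  obtain ⟨t, rfl⟩ := Multiset.exists_cons_of_mem ha
  have ha' := h a (by simp)
  have ht := multiset_prod_le_one t fun x hx => h x (Multiset.mem_cons_of_mem hx)
  rw [Multiset.prod_cons]
  nlinarith [ha'.1, ha'.2, ht.1, ht.2]

open Polynomial Complex in
theorem aux_not_integral (n d : ℕ) (hn : 1 ≤ n) (hd : 2 ≤ d) (α : ℝ)
    (hProot : Polynomial.aeval ((α : ℝ) : ℂ) (chebP n) = 0)
    (hirr : ∀ q : ℚ, (q : ℝ) ≠ α) :
    ¬ IsIntegral ℤ (α / d) := by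
  intro hx
  have hd0 : (d : ℝ) ≠ 0 := Nat.cast_ne_zero.mpr (by omega)
  have hdc0 : (d : ℂ) ≠ 0 := Nat.cast_ne_zero.mpr (by omega)
  have hα_rat : ∀ q : ℚ, ((α : ℝ) : ℂ) = (q : ℂ) → False := by
    intro q hq
    refine hirr q ?_
    have : ((q : ℝ) : ℂ) = ((α : ℝ) : ℂ) := by
      rw [Complex.ofReal_ratCast]; exact hq.symm
    exact_mod_cast this
  have hP0 : chebP n ≠ 0 := by
    intro hP
    have hn0 : (n : ℝ) ≠ 0 := Nat.cast_ne_zero.mpr (by omega)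
    have := cheb_aeval n (Real.pi / n)
    rw [hP, map_zero, mul_div_cancel₀ _ hn0, Real.cos_pi] at this
    norm_num at this
  have halg : IsAlgebraic ℚ ((α : ℝ) : ℂ) := ⟨chebP n, hP0, hProot⟩
  have hαint : IsIntegral ℚ ((α : ℝ) : ℂ) := halg.isIntegral
  have hAirr : Irreducible (minpoly ℚ ((α : ℝ) : ℂ)) := minpoly.irreducible hαint
  have hAmonic : (minpoly ℚ ((α : ℝ) : ℂ)).Monic := minpoly.monic hαint
  have hAdvd : minpoly ℚ ((α : ℝ) : ℂ) ∣ chebP n := minpoly.dvd ℚ _ hProot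
  have hAbound : ∀ z : ℂ, Polynomial.aeval z (minpoly ℚ ((α : ℝ) : ℂ)) = 0 →
      ‖z‖ < 2 := by
    intro z hz
    obtain ⟨Q, hQ⟩ := hAdvd
    have hzP : Polynomial.aeval z (chebP n) = 0 := by
      rw [hQ, map_mul, hz, zero_mul]
    obtain ⟨r, hr⟩ := chebP_root_form n (by omega) z hzP
    have habs : ‖z‖ = |2 * Real.cos r| := by rw [hr, Complex.norm_real, Real.norm_eq_abs]
    have hb : ‖z‖ ≤ 2 := by
      rw [habs, abs_mul, _root_.abs_two]
      nlinarith [Real.abs_cos_le_one r]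
    rcases hb.lt_or_eq with h2 | h2
    · exact h2
    exfalso
    have hcr : Real.cos r = 1 ∨ Real.cos r = -1 := by
      have habs1 : |Real.cos r| = 1 := by
        rw [habs, abs_mul, _root_.abs_two] at h2
        nlinarith [abs_nonneg (Real.cos r)]
      rcases (abs_eq (by norm_num : (0:ℝ) ≤ 1)).mp habs1 with h' | h'
      · exact Or.inl h'
      · exact Or.inr h'
    have key : ∀ q0 : ℚ, z = algebraMap ℚ ℂ q0 → False := by
      intro q0 hq0
      rw [hq0] at hz
      have hmin : minpoly ℚ ((α : ℝ) : ℂ) = minpoly ℚ (algebraMap ℚ ℂ q0) :=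
        minpoly.eq_of_irreducible_of_monic hAirr hz hAmonic
      rw [minpoly.eq_X_sub_C] at hmin
      have haα : Polynomial.aeval ((α : ℝ) : ℂ) (minpoly ℚ ((α : ℝ) : ℂ)) = 0 :=
        minpoly.aeval ℚ _
      rw [hmin] at haα
      simp only [map_sub, Polynomial.aeval_X, Polynomial.aeval_C] at haα
      rw [sub_eq_zero] at haα
      exact hα_rat q0 (by rw [haα, eq_ratCast])
    rcases hcr with hc | hc
    · exact key 2 (by rw [hr, hc]; push_cast; norm_num)
    · exact key (-2) (by rw [hr, hc]; push_cast; norm_num)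
  -- x = α/d
  have hxint : IsIntegral ℤ (((α / d : ℝ) : ℂ)) := by
    have heq : ((α / d : ℝ) : ℂ) = (IsScalarTower.toAlgHom ℤ ℝ ℂ) (α / d) := by simp
    rw [heq]
    exact hx.map _
  have hxintQ : IsIntegral ℚ (((α / d : ℝ) : ℂ)) := hxint.tower_top
  have hQroot : Polynomial.aeval ((α / d : ℝ) : ℂ)
      ((minpoly ℚ ((α : ℝ) : ℂ)).comp (Polynomial.C (d : ℚ) * Polynomial.X)) = 0 := by
    rw [Polynomial.aeval_comp, map_mul, Polynomial.aeval_C, Polynomial.aeval_X]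
    have : (algebraMap ℚ ℂ) (d : ℚ) * ((α / d : ℝ) : ℂ) = ((α : ℝ) : ℂ) := by
      rw [eq_ratCast]
      push_cast
      field_simp
    rw [this]
    exact minpoly.aeval ℚ _
  have hdvd2 : minpoly ℚ ((α / d : ℝ) : ℂ) ∣
      (minpoly ℚ ((α : ℝ) : ℂ)).comp (Polynomial.C (d : ℚ) * Polynomial.X) :=
    minpoly.dvd ℚ _ hQroot
  have hxroots : ∀ z : ℂ, Polynomial.aeval z (minpoly ℚ ((α / d : ℝ) : ℂ)) = 0 →
      ‖z‖ < 1 := by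
    intro z hz
    obtain ⟨Q, hQ⟩ := hdvd2
    have hzc : Polynomial.aeval z
        ((minpoly ℚ ((α : ℝ) : ℂ)).comp (Polynomial.C (d : ℚ) * Polynomial.X)) = 0 := by
      rw [hQ, map_mul, hz, zero_mul]
    rw [Polynomial.aeval_comp, map_mul, Polynomial.aeval_C, Polynomial.aeval_X,
      eq_ratCast] at hzc
    push_cast at hzc
    have hb := hAbound _ hzc
    rw [norm_mul, Complex.norm_natCast] at hb
    have hd2 : (2 : ℝ) ≤ (d : ℝ) := by exact_mod_cast hd
    nlinarith [norm_nonneg z]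
  have hmq : minpoly ℚ ((α / d : ℝ) : ℂ)
      = (minpoly ℤ ((α / d : ℝ) : ℂ)).map (algebraMap ℤ ℚ) :=
    minpoly.isIntegrallyClosed_eq_field_fractions' ℚ hxint
  set M : ℂ[X] := (minpoly ℚ ((α / d : ℝ) : ℂ)).map (algebraMap ℚ ℂ) with hM
  have hM_monic : M.Monic := (minpoly.monic hxintQ).map _
  have hsplits : M.Splits := IsAlgClosed.splits M
  have hcoeff := hsplits.coeff_zero_eq_prod_roots_of_monic hM_monic
  have hdeg : 0 < (minpoly ℚ ((α / d : ℝ) : ℂ)).natDegree := minpoly.natDegree_pos hxintQ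
  have hMdeg : M.natDegree = (minpoly ℚ ((α / d : ℝ) : ℂ)).natDegree := by
    rw [hM]; exact Polynomial.natDegree_map_eq_of_injective (algebraMap ℚ ℂ).injective _
  have hcard : M.roots.card = M.natDegree := (Polynomial.splits_iff_card_roots).mp hsplits
  have hrootsne : M.roots ≠ 0 := by
    intro h0
    rw [h0] at hcard
    simp only [Multiset.card_zero] at hcard
    rw [hMdeg] at hcard
    omega
  have hprodlt : ‖M.roots.prod‖ < 1 := by
    rw [show ‖M.roots.prod‖ = (M.roots.map (‖·‖)).prod from map_multiset_prod (normHom (α := ℂ)) _]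
    apply multiset_prod_lt_one
    · simp only [ne_eq, Multiset.map_eq_zero]
      exact hrootsne
    · intro x hxm
      obtain ⟨z, hzmem, rfl⟩ := Multiset.mem_map.mp hxm
      have hzroot : Polynomial.aeval z (minpoly ℚ ((α / d : ℝ) : ℂ)) = 0 := by
        have := Polynomial.isRoot_of_mem_roots hzmem
        rwa [Polynomial.IsRoot, hM, Polynomial.eval_map, ← Polynomial.aeval_def] at this
      exact ⟨norm_nonneg _, hxroots z hzroot⟩
  have hcoeff0 : ‖M.coeff 0‖ < 1 := by
    have habs : ‖(-1 : ℂ) ^ M.natDegree * M.roots.prod‖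
        = ‖M.roots.prod‖ := by
      rw [norm_mul, norm_pow, norm_neg, norm_one, one_pow, one_mul]
    rw [hcoeff, habs]
    exact hprodlt
  have hMint : M = (minpoly ℤ ((α / d : ℝ) : ℂ)).map (algebraMap ℤ ℂ) := by
    rw [hM, hmq, Polynomial.map_map, ← IsScalarTower.algebraMap_eq ℤ ℚ ℂ]
  have hc0 : M.coeff 0 = (((minpoly ℤ ((α / d : ℝ) : ℂ)).coeff 0 : ℤ) : ℂ) := by
    rw [hMint, Polynomial.coeff_map, eq_intCast]
  have hmc0 : (minpoly ℤ ((α / d : ℝ) : ℂ)).coeff 0 = 0 := by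
    by_contra hc
    have h1 : (1 : ℝ) ≤ |((minpoly ℤ ((α / d : ℝ) : ℂ)).coeff 0 : ℝ)| := by
      have := Int.one_le_abs hc
      calc (1:ℝ) ≤ ((|(minpoly ℤ ((α / d : ℝ) : ℂ)).coeff 0| : ℤ) : ℝ) := by
            exact_mod_cast this
        _ = |((minpoly ℤ ((α / d : ℝ) : ℂ)).coeff 0 : ℝ)| := by push_cast; try ring
    rw [hc0] at hcoeff0
    have habs2 : ‖(((minpoly ℤ ((α / d : ℝ) : ℂ)).coeff 0 : ℤ) : ℂ)‖
        = |((minpoly ℤ ((α / d : ℝ) : ℂ)).coeff 0 : ℝ)| := by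
      rw [show ((((minpoly ℤ ((α / d : ℝ) : ℂ)).coeff 0 : ℤ)) : ℂ)
          = ((((minpoly ℤ ((α / d : ℝ) : ℂ)).coeff 0 : ℝ)) : ℂ) by push_cast; ring,
        Complex.norm_real, Real.norm_eq_abs]
    rw [habs2] at hcoeff0
    linarith
  have hx0 : ((α / d : ℝ) : ℂ) = 0 := by
    have hq0 : (minpoly ℚ ((α / d : ℝ) : ℂ)).coeff 0 = 0 := by
      rw [hmq, Polynomial.coeff_map, hmc0, map_zero]
    exact (minpoly.coeff_zero_eq_zero hxintQ).mp hq0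
  have hα0 : α = 0 := by
    rw [Complex.ofReal_eq_zero] at hx0
    field_simp at hx0
    simpa using hx0
  exact hα_rat 0 (by rw [hα0]; norm_num)

theorem two_cos_div_not_algebraic_integer (n d : ℕ) (hn : 1 ≤ n) (hd : 2 ≤ d)
    (h : ¬ ∃ q : ℚ, (q : ℝ) = 2 * Real.cos (2 * Real.pi / n)) :
    ¬ IsIntegral ℤ ((2 * Real.cos (2 * Real.pi / n)) / d) := by
  have hn0 : (n : ℝ) ≠ 0 := Nat.cast_ne_zero.mpr (by omega)
  apply aux_not_integral n d hn hd
  · rw [cheb_aeval n (2 * Real.pi / n), mul_div_cancel₀ _ hn0, Real.cos_two_pi]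
    norm_num
  · intro q hq
    exact h ⟨q, hq⟩
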